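/- Let A, B, C be three affinely independent points in the Euclidean plane whose triangle is not equilateral. Then there exists a nonzero vector v in ℝ² such that for every real k, the locus T_k = {P ∈ convexHull{A,B,C} : V(P) = k} is the intersection of the triangle with an affine line whose direction is spanned by v; in particular, the nonempty loci T_k for different values of k are mutually parallel segments. -/

import Mathlib

noncomputable section

/-- The point `(x, y)` of the Euclidean plane `ℝ²`. -/
def pt (x y : ℝ) : EuclideanSpace ℝ (Fin 2) :=
  (WithLp.equiv 2 (Fin 2 → ℝ)).symm ![x, y]

/-- The line through `X` and `Y`, i.e. the affine span of `{X, Y}`, as a set. -/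
def lineThrough (X Y : EuclideanSpace ℝ (Fin 2)) : Set (EuclideanSpace ℝ (Fin 2)) :=
  (affineSpan ℝ {X, Y} : AffineSubspace ℝ (EuclideanSpace ℝ (Fin 2)))

/-- The distance sum function of the triangle `ABC`:
`V(P) = dist(P, line BC) + dist(P, line CA) + dist(P, line AB)`. -/
def vSum (A B C P : EuclideanSpace ℝ (Fin 2)) : ℝ :=
  Metric.infDist P (lineThrough B C) + Metric.infDist P (lineThrough C A) +
    Metric.infDist P (lineThrough A B)

/-- The squared-distance sum function of the triangle `ABC`:
`W(P) = dist(P, line BC)² + dist(P, line CA)² + dist(P, line AB)²`. -/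
def wSum (A B C P : EuclideanSpace ℝ (Fin 2)) : ℝ :=
  Metric.infDist P (lineThrough B C) ^ 2 + Metric.infDist P (lineThrough C A) ^ 2 +
    Metric.infDist P (lineThrough A B) ^ 2

lemma pt_apply_zero (x y : ℝ) : (pt x y) 0 = x := rfl
lemma pt_apply_one (x y : ℝ) : (pt x y) 1 = y := rfl

lemma point_ext {P Q : EuclideanSpace ℝ (Fin 2)} (h0 : P 0 = Q 0) (h1 : P 1 = Q 1) : P = Q := by
  ext i
  fin_cases i <;> assumption


lemma mem_lineThrough_iff {X Y Q : EuclideanSpace ℝ (Fin 2)} :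
    Q ∈ lineThrough X Y ↔ ∃ r : ℝ, Q = r • (Y - X) + X := by
  have h := vadd_left_mem_affineSpan_pair (k := ℝ) (p₁ := X) (p₂ := Y) (v := Q - X)
  simp only [vsub_eq_sub, vadd_eq_add, sub_add_cancel] at h
  rw [lineThrough, SetLike.mem_coe, h]
  simp_rw [eq_sub_iff_add_eq, eq_comm]


lemma dist_coords (X Y : EuclideanSpace ℝ (Fin 2)) :
    dist X Y = Real.sqrt ((Y 0 - X 0)^2 + (Y 1 - X 1)^2) := by
  rw [EuclideanSpace.dist_eq]
  simp only [Fin.sum_univ_two, Real.dist_eq, sq_abs]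
  ring_nf


lemma infDist_lineThrough (X Y P : EuclideanSpace ℝ (Fin 2)) (h : X ≠ Y) :
    Metric.infDist P (lineThrough X Y)
      = |(Y 0 - X 0) * (P 1 - X 1) - (Y 1 - X 1) * (P 0 - X 0)| / dist X Y := by
  set u0 := Y 0 - X 0 with hu0
  set u1 := Y 1 - X 1 with hu1
  set p0 := P 0 - X 0 with hp0
  set p1 := P 1 - X 1 with hp1
  set D := u0 * p1 - u1 * p0 with hD
  set S2 := u0 ^ 2 + u1 ^ 2 with hS2
  have hd : dist X Y = Real.sqrt S2 := dist_coords X Y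
  have hdpos : 0 < dist X Y := dist_pos.2 h
  have hS2pos : 0 < S2 := by
    rw [hd] at hdpos
    nlinarith [Real.sq_sqrt (show (0:ℝ) ≤ S2 by positivity), Real.sqrt_nonneg S2]
  have hdist : ∀ r : ℝ, dist P (r • (Y - X) + X)
      = Real.sqrt ((p0 - r * u0) ^ 2 + (p1 - r * u1) ^ 2) := by
    intro r
    rw [dist_coords]
    simp only [PiLp.add_apply, PiLp.smul_apply, PiLp.sub_apply, smul_eq_mul]
    rw [hp0, hp1, hu0, hu1]; ring_nf
  apply le_antisymm
  · have hmem : ((p0 * u0 + p1 * u1) / S2) • (Y - X) + X ∈ lineThrough X Y :=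
      mem_lineThrough_iff.2 ⟨_, rfl⟩
    refine le_trans (Metric.infDist_le_dist_of_mem hmem) ?_
    rw [hdist, hd]
    have harg : (p0 - (p0 * u0 + p1 * u1) / S2 * u0) ^ 2
        + (p1 - (p0 * u0 + p1 * u1) / S2 * u1) ^ 2 = D ^ 2 / S2 := by
      field_simp
      ring
    rw [harg, Real.sqrt_div (by positivity), Real.sqrt_sq_eq_abs]
  · rw [Metric.infDist_eq_iInf]
    haveI : Nonempty (lineThrough X Y) := ⟨X, mem_lineThrough_iff.2 ⟨0, by simp⟩⟩
    apply le_ciInf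
    rintro ⟨Q, hQ⟩
    simp only []
    obtain ⟨r, rfl⟩ := mem_lineThrough_iff.1 hQ
    rw [hdist, hd, div_le_iff₀ (by rw [← hd]; exact hdpos), ← Real.sqrt_mul (by positivity)]
    rw [show |D| = Real.sqrt (D ^ 2) by rw [Real.sqrt_sq_eq_abs]]
    apply Real.sqrt_le_sqrt
    rw [hD, hS2]
    nlinarith [sq_nonneg ((p0 - r * u0) * u0 + (p1 - r * u1) * u1)]

lemma det_ne_zero (A B C : EuclideanSpace ℝ (Fin 2))
    (hind : AffineIndependent ℝ ![A, B, C]) :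
    (C 0 - B 0) * (A 1 - B 1) - (C 1 - B 1) * (A 0 - B 0) ≠ 0 := by
  intro hs0
  rw [affineIndependent_iff_not_collinear_set] at hind
  apply hind
  rw [collinear_iff_of_mem (show B ∈ ({A, B, C} : Set (EuclideanSpace ℝ (Fin 2))) by simp)]
  by_cases hCB : C = B
  · refine ⟨A - B, ?_⟩
    intro p hp
    simp only [Set.mem_insert_iff, Set.mem_singleton_iff] at hp
    rcases hp with rfl | rfl | rfl
    · exact ⟨1, by simp⟩
    · exact ⟨0, by simp⟩
    · exact ⟨0, by simp [hCB]⟩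
  · refine ⟨C - B, ?_⟩
    have h0 : ¬(C 0 - B 0 = 0 ∧ C 1 - B 1 = 0) := by
      rintro ⟨h1, h2⟩
      exact hCB (point_ext (by linarith) (by linarith))
    intro p hp
    simp only [Set.mem_insert_iff, Set.mem_singleton_iff] at hp
    rcases hp with rfl | rfl | rfl
    · by_cases hu0 : C 0 - B 0 = 0
      · have hu1 : C 1 - B 1 ≠ 0 := fun h => h0 ⟨hu0, h⟩
        refine ⟨(p 1 - B 1) / (C 1 - B 1), point_ext ?_ ?_⟩ <;>
          simp only [vadd_eq_add, PiLp.add_apply, PiLp.smul_apply, PiLp.sub_apply, smul_eq_mul]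
        · have h2 : (C 1 - B 1) * (p 0 - B 0) = 0 := by rw [hu0] at hs0; linarith
          have hA0 : p 0 - B 0 = 0 := by
            rcases mul_eq_zero.1 h2 with h | h
            · exact absurd h hu1
            · exact h
          rw [hu0]
          linarith
        · field_simp
          ring
      · refine ⟨(p 0 - B 0) / (C 0 - B 0), point_ext ?_ ?_⟩ <;>
          simp only [vadd_eq_add, PiLp.add_apply, PiLp.smul_apply, PiLp.sub_apply, smul_eq_mul]
        · field_simp
          ring
        · field_simp
          linarith [hs0]
    · exact ⟨0, by simp⟩
    · exact ⟨1, by simp⟩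

lemma sign_on_hull (X Y Z P : EuclideanSpace ℝ (Fin 2)) (ε : ℝ)
    (hZ : 0 ≤ ε * ((Y 0 - X 0) * (Z 1 - X 1) - (Y 1 - X 1) * (Z 0 - X 0)))
    (hP : P ∈ convexHull ℝ ({Z, X, Y} : Set (EuclideanSpace ℝ (Fin 2)))) :
    0 ≤ ε * ((Y 0 - X 0) * (P 1 - X 1) - (Y 1 - X 1) * (P 0 - X 0)) := by
  have hlin : IsLinearMap ℝ (fun Q : EuclideanSpace ℝ (Fin 2) =>
      ε * ((Y 0 - X 0) * Q 1 - (Y 1 - X 1) * Q 0)) := by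
    constructor
    · intro p q; simp only [PiLp.add_apply]; ring
    · intro c p; simp only [PiLp.smul_apply, smul_eq_mul]; ring
  have key : convexHull ℝ ({Z, X, Y} : Set (EuclideanSpace ℝ (Fin 2))) ⊆
      {Q | ε * ((Y 0 - X 0) * X 1 - (Y 1 - X 1) * X 0)
          ≤ ε * ((Y 0 - X 0) * Q 1 - (Y 1 - X 1) * Q 0)} := by
    apply convexHull_min _ (convex_halfSpace_ge hlin _)
    intro q hq
    simp only [Set.mem_insert_iff, Set.mem_singleton_iff] at hq
    rcases hq with rfl | rfl | rfl <;> simp only [Set.mem_setOf_eq] <;> nlinarith [hZ]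
  have h := key hP
  simp only [Set.mem_setOf_eq] at h
  nlinarith [h]

set_option maxHeartbeats 1000000

/-- For a non-equilateral triangle there is a fixed nonzero direction `v` such that each
locus `T_k` is the intersection of the triangle with an affine line of direction `v`;
in particular the nonempty loci are mutually parallel segments. -/
theorem stmt_4 (A B C : EuclideanSpace ℝ (Fin 2))
    (hind : AffineIndependent ℝ ![A, B, C])
    (hne : ¬ (dist A B = dist B C ∧ dist B C = dist C A)) :
    ∃ v : EuclideanSpace ℝ (Fin 2), v ≠ 0 ∧ ∀ k : ℝ, ∃ P₀ : EuclideanSpace ℝ (Fin 2),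
      {P ∈ convexHull ℝ ({A, B, C} : Set (EuclideanSpace ℝ (Fin 2))) | vSum A B C P = k}
        = convexHull ℝ ({A, B, C} : Set (EuclideanSpace ℝ (Fin 2)))
            ∩ {P | ∃ t : ℝ, P = P₀ + t • v} := by
  have hinj := hind.injective
  have hAB : A ≠ B := fun h =>
    absurd (hinj (show ![A, B, C] 0 = ![A, B, C] 1 by simp [h])) (by decide)
  have hBC : B ≠ C := fun h =>
    absurd (hinj (show ![A, B, C] 1 = ![A, B, C] 2 by simp [h])) (by decide)
  have hCA : C ≠ A := fun h =>
    absurd (hinj (show ![A, B, C] 2 = ![A, B, C] 0 by simp [h])) (by decide)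
  have hapos : (0:ℝ) < dist B C := dist_pos.2 hBC
  have hbpos : (0:ℝ) < dist C A := dist_pos.2 hCA
  have hcpos : (0:ℝ) < dist A B := dist_pos.2 hAB
  obtain ⟨s, hs_def⟩ : ∃ s : ℝ, s = (C 0 - B 0) * (A 1 - B 1) - (C 1 - B 1) * (A 0 - B 0) :=
    ⟨_, rfl⟩
  have hs : s ≠ 0 := hs_def ▸ det_ne_zero A B C hind
  obtain ⟨ε, hε1, hεs⟩ : ∃ ε : ℝ, (ε = 1 ∨ ε = -1) ∧ ε * s = |s| := by
    rcases le_or_gt 0 s with h | h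
    · exact ⟨1, Or.inl rfl, by rw [abs_of_nonneg h]; ring⟩
    · exact ⟨-1, Or.inr rfl, by rw [abs_of_neg h]; ring⟩
  have habs : ∀ x : ℝ, 0 ≤ ε * x → |x| = ε * x := by
    intro x hx
    rcases hε1 with rfl | rfl
    · rw [one_mul] at hx ⊢; exact abs_of_nonneg hx
    · have : x ≤ 0 := by linarith
      rw [abs_of_nonpos this]; ring
  obtain ⟨α, hα⟩ : ∃ α : ℝ, α = ε * (-((C 1 - B 1) / dist B C + (A 1 - C 1) / dist C A
      + (B 1 - A 1) / dist A B)) := ⟨_, rfl⟩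
  obtain ⟨β, hβ⟩ : ∃ β : ℝ, β = ε * ((C 0 - B 0) / dist B C + (A 0 - C 0) / dist C A
      + (B 0 - A 0) / dist A B) := ⟨_, rfl⟩
  obtain ⟨γ, hγ⟩ : ∃ γ : ℝ, γ = ε * (((C 1 - B 1) * B 0 - (C 0 - B 0) * B 1) / dist B C
      + ((A 1 - C 1) * C 0 - (A 0 - C 0) * C 1) / dist C A
      + ((B 1 - A 1) * A 0 - (B 0 - A 0) * A 1) / dist A B) := ⟨_, rfl⟩
  -- set permutations
  have hset2 : ({A, B, C} : Set (EuclideanSpace ℝ (Fin 2))) = {B, C, A} := by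
    ext x; simp only [Set.mem_insert_iff, Set.mem_singleton_iff]; tauto
  have hset3 : ({A, B, C} : Set (EuclideanSpace ℝ (Fin 2))) = {C, A, B} := by
    ext x; simp only [Set.mem_insert_iff, Set.mem_singleton_iff]; tauto
  -- the key affine formula for vSum on the hull
  have key : ∀ P ∈ convexHull ℝ ({A, B, C} : Set (EuclideanSpace ℝ (Fin 2))),
      vSum A B C P = α * P 0 + β * P 1 + γ := by
    intro P hP
    have h1 := sign_on_hull B C A P ε
      (by rw [show (C 0 - B 0) * (A 1 - B 1) - (C 1 - B 1) * (A 0 - B 0) = s from hs_def.symm,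
        hεs]; exact abs_nonneg s) hP
    have h2 := sign_on_hull C A B P ε
      (by rw [show (A 0 - C 0) * (B 1 - C 1) - (A 1 - C 1) * (B 0 - C 0) = s by
        rw [hs_def]; ring, hεs]; exact abs_nonneg s) (hset2 ▸ hP)
    have h3 := sign_on_hull A B C P ε
      (by rw [show (B 0 - A 0) * (C 1 - A 1) - (B 1 - A 1) * (C 0 - A 0) = s by
        rw [hs_def]; ring, hεs]; exact abs_nonneg s) (hset3 ▸ hP)
    rw [vSum, infDist_lineThrough B C P hBC, infDist_lineThrough C A P hCA,
      infDist_lineThrough A B P hAB, habs _ h1, habs _ h2, habs _ h3, hα, hβ, hγ]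
    field_simp
    ring
  -- nonvanishing of the linear part
  have hεne : ε ≠ 0 := by rcases hε1 with rfl | rfl <;> norm_num
  have hαβ : ¬(α = 0 ∧ β = 0) := by
    rintro ⟨h0, h1⟩
    rw [hα, mul_eq_zero] at h0
    rw [hβ, mul_eq_zero] at h1
    have e0 : (C 1 - B 1) / dist B C + (A 1 - C 1) / dist C A + (B 1 - A 1) / dist A B = 0 := by
      rcases h0 with h | h
      · exact absurd h hεne
      · linarith
    have e1 : (C 0 - B 0) / dist B C + (A 0 - C 0) / dist C A + (B 0 - A 0) / dist A B = 0 := by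
      rcases h1 with h | h
      · exact absurd h hεne
      · exact h
    have hbc : s / dist C A - s / dist A B = 0 := by
      linear_combination (C 0 - B 0) * e0 - (C 1 - B 1) * e1
        + (1 / dist C A - 1 / dist A B) * hs_def
    have hac : s / dist B C - s / dist A B = 0 := by
      linear_combination (-(A 0 - C 0)) * e0 + (A 1 - C 1) * e1
        + (1 / dist B C - 1 / dist A B) * hs_def
    have hb_c : dist C A = dist A B := by
      rw [div_sub_div _ _ (ne_of_gt hbpos) (ne_of_gt hcpos), div_eq_zero_iff] at hbc
      rcases hbc with h | h
      · have : s * (dist A B - dist C A) = 0 := by linarith [h]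
        rcases mul_eq_zero.1 this with h' | h'
        · exact absurd h' hs
        · linarith
      · exact absurd h (by positivity)
    have ha_c : dist B C = dist A B := by
      rw [div_sub_div _ _ (ne_of_gt hapos) (ne_of_gt hcpos), div_eq_zero_iff] at hac
      rcases hac with h | h
      · have : s * (dist A B - dist B C) = 0 := by linarith [h]
        rcases mul_eq_zero.1 this with h' | h'
        · exact absurd h' hs
        · linarith
      · exact absurd h (by positivity)
    exact hne ⟨ha_c.symm, ha_c.trans hb_c.symm⟩
  have hQpos : (0:ℝ) < α ^ 2 + β ^ 2 := by
    rcases not_and_or.mp hαβ with h | h <;> positivity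
  have hQne : α ^ 2 + β ^ 2 ≠ 0 := ne_of_gt hQpos
  refine ⟨pt (-β) α, ?_, ?_⟩
  · intro hv0
    have h0 : -β = 0 := by rw [← pt_apply_zero (-β) α, hv0]; rfl
    have h1 : α = 0 := by rw [← pt_apply_one (-β) α, hv0]; rfl
    exact hαβ ⟨h1, by linarith⟩
  · intro k
    refine ⟨((k - γ) / (α ^ 2 + β ^ 2)) • pt α β, ?_⟩
    ext P
    simp only [Set.mem_setOf_eq, Set.mem_inter_iff]
    constructor
    · rintro ⟨hPhull, hVk⟩
      refine ⟨hPhull, ?_⟩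
      rw [key P hPhull] at hVk
      refine ⟨(α * (P 1 - (k - γ) / (α ^ 2 + β ^ 2) * β)
          - β * (P 0 - (k - γ) / (α ^ 2 + β ^ 2) * α)) / (α ^ 2 + β ^ 2), point_ext ?_ ?_⟩ <;>
        simp only [PiLp.add_apply, PiLp.smul_apply, smul_eq_mul, pt_apply_zero, pt_apply_one]
      · field_simp
        linear_combination (α * (α ^ 2 + β ^ 2)) * hVk
      · field_simp
        linear_combination (β * (α ^ 2 + β ^ 2)) * hVk
    · rintro ⟨hPhull, t, rfl⟩
      refine ⟨hPhull, ?_⟩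
      rw [key _ hPhull]
      simp only [PiLp.add_apply, PiLp.smul_apply, smul_eq_mul, pt_apply_zero, pt_apply_one]
      · field_simp
        ring
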